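/- arXiv:2104.05625 — 5 statements merged into one kernel-verified Lean document; each statement's English description precedes it below -/
import Mathlib

section
/- Let M be a commutative ℚ(q)-algebra and B ∈ M. Define w_m(x) ∈ M[x] by w_0 = 1, w_1 = x, and x·w_m = w_{m+1} + B(1-q^{2m}) w_{m-1}. Define v_m(x) = Σ_{k=0}^{⌊m/2⌋} (-1)^k q^k η(k) · ([m]_q! / ([m-2k]_q! [k]_q!)) · w_{m-2k}(x), where η(k) = (q-q^{-1})^k q^{-k(k+1)/2} B^k. Then the v_m satisfy the recursion x·v_m = v_{m+1} + B(1-q^{-2m}) v_{m-1} with v_0 = 1 and v_1 = x. -/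
open Polynomial Finset

noncomputable section

/-- The indeterminate `q` in `ℚ(q)`. -/
def q : RatFunc ℚ := RatFunc.X

/-- The balanced quantum integer `[m]_q = (q^m - q^{-m})/(q - q^{-1})`. -/
def qnum (m : ℕ) : RatFunc ℚ := (q ^ (m : ℤ) - q ^ (-(m : ℤ))) / (q - q⁻¹)

/-- The balanced quantum factorial `[m]_q!`. -/
def qfact : ℕ → RatFunc ℚ
  | 0 => 1
  | n + 1 => qfact n * qnum (n + 1)

lemma q_ne_zero : q ≠ 0 := RatFunc.X_ne_zero

lemma q_pow_ne_one {n : ℕ} (hn : n ≠ 0) : q ^ n ≠ 1 := by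
  intro h
  have h2 : (Polynomial.X : Polynomial ℚ) ^ n = 1 := by
    apply RatFunc.algebraMap_injective ℚ
    rw [map_pow, map_one, RatFunc.algebraMap_X]
    exact h
  have := congrArg natDegree h2
  simp [natDegree_X_pow] at this
  exact hn this

lemma qpow_sub_one {n : ℕ} (hn : n ≠ 0) : q ^ n - 1 ≠ 0 :=
  sub_ne_zero.mpr (q_pow_ne_one hn)

lemma q_sq_ne_one : q ^ 2 - 1 ≠ 0 := qpow_sub_one (by norm_num)

lemma r_ne_zero : q - q⁻¹ ≠ 0 := by
  intro h
  have hq := q_ne_zero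
  have : q * q = 1 := by
    have h1 : q = q⁻¹ := by linear_combination h
    nth_rewrite 2 [h1]
    exact mul_inv_cancel₀ hq
  have := q_pow_ne_one (n := 2) (by norm_num)
  rw [pow_two] at this
  exact this ‹q * q = 1›

lemma qnum_ne_zero {n : ℕ} (hn : n ≠ 0) : qnum n ≠ 0 := by
  rw [qnum]
  apply div_ne_zero _ r_ne_zero
  rw [zpow_natCast, zpow_neg, zpow_natCast, sub_ne_zero]
  intro h
  have hq := q_ne_zero
  have : q ^ n * q ^ n = 1 := by
    nth_rewrite 1 [h]
    exact inv_mul_cancel₀ (pow_ne_zero n hq)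
  rw [← pow_add] at this
  exact q_pow_ne_one (by omega) this

lemma qfact_ne_zero (n : ℕ) : qfact n ≠ 0 := by
  induction n with
  | zero => simp [qfact]
  | succ k ih => exact mul_ne_zero ih (qnum_ne_zero (by omega))

lemma qnum_eq (a : ℕ) : qnum a = (q ^ a - (q ^ a)⁻¹) / (q - q⁻¹) := by
  rw [qnum, zpow_natCast, zpow_neg, zpow_natCast]

lemma qfact_succ (n : ℕ) : qfact (n+1) = qfact n * qnum (n+1) := rfl

def S (m k : ℕ) : RatFunc ℚ :=
  (-1 : RatFunc ℚ) ^ k * q ^ k * ((q - q⁻¹) ^ k * q ^ (-((k * (k + 1) / 2 : ℕ) : ℤ))) *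
    (qfact m / (qfact (m - 2 * k) * qfact k))

lemma tri (j : ℕ) : (j+1) * ((j+1) + 1) / 2 = j * (j+1) / 2 + (j+1) := by
  have h : (j+1) * ((j+1)+1) = j*(j+1) + 2*(j+1) := by ring
  omega

lemma zq_add (a b : ℕ) : q ^ (-((a + b : ℕ) : ℤ)) = q ^ (-(a : ℤ)) * q ^ (-(b : ℤ)) := by
  push_cast
  rw [neg_add, zpow_add₀ q_ne_zero]

lemma zq (a : ℕ) : q ^ (-(a : ℤ)) = (q ^ a)⁻¹ := by rw [zpow_neg, zpow_natCast]

lemma r_eq : q - q⁻¹ = (q ^ 2 - 1) / q := by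
  field_simp [q_ne_zero]

lemma qnum_eq' (a : ℕ) : qnum a = (q ^ (2 * a) - 1) * q / ((q ^ 2 - 1) * q ^ a) := by
  rw [qnum_eq, r_eq]
  have h1 : (q : RatFunc ℚ) ^ a ≠ 0 := pow_ne_zero _ q_ne_zero
  field_simp [q_ne_zero, q_sq_ne_one]
  ring

set_option maxHeartbeats 8000000 in
lemma key_main (d j : ℕ) :
    S (d+2*j+2) (j+1) + (1 - q ^ (2*(d+2))) * S (d+2*j+2) j
      = S (d+2*j+3) (j+1) + (1 - q ^ (-((2*(d+2*j+2) : ℕ) : ℤ))) * S (d+2*j+1) j := by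
  have e1 : d+2*j+2 - 2*(j+1) = d := by omega
  have e2 : d+2*j+2 - 2*j = d + 2 := by omega
  have e3 : d+2*j+3 - 2*(j+1) = d + 1 := by omega
  have e4 : d+2*j+1 - 2*j = d + 1 := by omega
  have f2 : qfact (d+2*j+3) = qfact (d+2*j+1) * qnum (d+2*j+2) * qnum (d+2*j+3) := by
    rw [show d+2*j+3 = (d+2*j+2)+1 from rfl, qfact_succ, show d+2*j+2 = (d+2*j+1)+1 from rfl,
      qfact_succ]
  have f1 : qfact (d+2*j+2) = qfact (d+2*j+1) * qnum (d+2*j+2) := by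
    rw [show d+2*j+2 = (d+2*j+1)+1 from rfl, qfact_succ]
  have f3 : qfact (d+2) = qfact d * qnum (d+1) * qnum (d+2) := by
    rw [show d+2 = (d+1)+1 from rfl, qfact_succ, show d+1 = d+1 from rfl, qfact_succ]
  have f4 : qfact (d+1) = qfact d * qnum (d+1) := qfact_succ d
  have f5 : qfact (j+1) = qfact j * qnum (j+1) := qfact_succ j
  rw [S, S, S, S, e1, e2, e3, e4, tri j, zq_add, f2, f1, f3, f4, f5]
  simp only [qnum_eq', r_eq, div_pow, zq]
  have h1 : q^(d+1) = q^d * q := pow_succ q d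
  have h2 : q^(d+2) = q^d * q^2 := pow_add q d 2
  have h3 : q^(j+1) = q^j * q := pow_succ q j
  have h4 : q^(d+2*j+2) = q^d * (q^j)^2 * q^2 := by
    rw [show d+2*j+2 = d + j*2 + 2 by ring, pow_add, pow_add, pow_mul]
  have h5 : q^(d+2*j+3) = q^d * (q^j)^2 * q^3 := by
    rw [show d+2*j+3 = d + j*2 + 3 by ring, pow_add, pow_add, pow_mul]
  have h6 : q^(2*(d+1)) = (q^d)^2 * q^2 := by
    rw [show 2*(d+1) = d*2 + 2 by ring, pow_add, pow_mul]
  have h7 : q^(2*(d+2)) = (q^d)^2 * q^4 := by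
    rw [show 2*(d+2) = d*2 + 4 by ring, pow_add, pow_mul]
  have h8 : q^(2*(j+1)) = (q^j)^2 * q^2 := by
    rw [show 2*(j+1) = j*2 + 2 by ring, pow_add, pow_mul]
  have h9 : q^(2*(d+2*j+2)) = (q^d)^2 * (q^j)^4 * q^4 := by
    rw [show 2*(d+2*j+2) = d*2 + j*4 + 4 by ring, pow_add, pow_add, pow_mul, pow_mul]
  have h10 : q^(2*(d+2*j+3)) = (q^d)^2 * (q^j)^4 * q^6 := by
    rw [show 2*(d+2*j+3) = d*2 + j*4 + 6 by ring, pow_add, pow_add, pow_mul, pow_mul]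
  have h11 : ((q:RatFunc ℚ)^2-1)^(j+1) = (q^2-1)^j * (q^2-1) := pow_succ _ j
  have h12 : ((-1:RatFunc ℚ))^(j+1) = (-1)^j * (-1) := pow_succ _ j
  simp only [h1, h2, h3, h4, h5, h6, h7, h8, h9, h10, h11, h12]
  have hx : (q:RatFunc ℚ)^d ≠ 0 := pow_ne_zero _ q_ne_zero
  have hy : (q:RatFunc ℚ)^j ≠ 0 := pow_ne_zero _ q_ne_zero
  have hT : (q:RatFunc ℚ)^(j*(j+1)/2) ≠ 0 := pow_ne_zero _ q_ne_zero
  have hz1 : ((q:RatFunc ℚ)^d)^2*q^2 - 1 ≠ 0 := by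
    rw [← pow_mul, ← pow_add]; exact qpow_sub_one (by omega)
  have hz2 : ((q:RatFunc ℚ)^d)^2*q^4 - 1 ≠ 0 := by
    rw [← pow_mul, ← pow_add]; exact qpow_sub_one (by omega)
  have hz3 : ((q:RatFunc ℚ)^j)^2*q^2 - 1 ≠ 0 := by
    rw [← pow_mul, ← pow_add]; exact qpow_sub_one (by omega)
  have hfd := qfact_ne_zero d
  have hfj := qfact_ne_zero j
  have hfm := qfact_ne_zero (d+2*j+1)
  clear e1 e2 e3 e4 f1 f2 f3 f4 f5 h1 h2 h3 h4 h5 h6 h7 h8 h9 h10 h11 h12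
  generalize hxg : (q:RatFunc ℚ)^d = x at hx hz1 hz2 ⊢
  generalize hyg : (q:RatFunc ℚ)^j = y at hy hz3 ⊢
  generalize hTg : (q:RatFunc ℚ)^(j*(j+1)/2) = T at hT ⊢
  generalize hEg : ((q:RatFunc ℚ)^2-1)^j = E
  generalize hGg : ((-1:RatFunc ℚ))^j = G
  generalize hFdg : qfact d = Fd at hfd ⊢
  generalize hFjg : qfact j = Fj at hfj ⊢
  generalize hFmg : qfact (d+2*j+1) = Fm at hfm ⊢
  rw [show (1:RatFunc ℚ) - (x^2*y^4*q^4)⁻¹ = (x^2*y^4*q^4 - 1)/(x^2*y^4*q^4) from by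
    field_simp [hx, hy, q_ne_zero]]
  have hq := q_ne_zero
  have hs := q_sq_ne_one
  simp only [inv_eq_one_div, div_mul_div_comm, mul_div_assoc', div_div_eq_mul_div, div_div,
    div_mul_eq_mul_div, mul_one, one_mul]
  rw [div_add_div _ _
    (by repeat first | assumption | exact one_ne_zero | apply mul_ne_zero | apply pow_ne_zero)
    (by repeat first | assumption | exact one_ne_zero | apply mul_ne_zero | apply pow_ne_zero),
    div_add_div _ _
    (by repeat first | assumption | exact one_ne_zero | apply mul_ne_zero | apply pow_ne_zero)
    (by repeat first | assumption | exact one_ne_zero | apply mul_ne_zero | apply pow_ne_zero),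
    div_eq_div_iff
    (by repeat first | assumption | exact one_ne_zero | apply mul_ne_zero | apply pow_ne_zero)
    (by repeat first | assumption | exact one_ne_zero | apply mul_ne_zero | apply pow_ne_zero)]
  ring

lemma qfact_zero : qfact 0 = 1 := rfl

set_option maxHeartbeats 1000000 in
lemma key_bdry (j : ℕ) :
    (1 - q ^ (2*1)) * S (2*j+1) j
      = S (2*j+2) (j+1) + (1 - q ^ (-((2*(2*j+1) : ℕ) : ℤ))) * S (2*j) j := by
  have e1 : 2*j+1 - 2*j = 1 := by omega
  have e2 : 2*j+2 - 2*(j+1) = 0 := by omega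
  have e3 : 2*j - 2*j = 0 := by omega
  have f1 : qfact (2*j+1) = qfact (2*j) * qnum (2*j+1) := qfact_succ _
  have f2 : qfact (2*j+2) = qfact (2*j) * qnum (2*j+1) * qnum (2*j+2) := by
    rw [show 2*j+2 = (2*j+1)+1 from rfl, qfact_succ, qfact_succ]
  have f5 : qfact (j+1) = qfact j * qnum (j+1) := qfact_succ j
  rw [S, S, S, e1, e2, e3, tri, zq_add, f2, f1, f5, qfact_zero,
    show qfact 1 = qfact 0 * qnum 1 from qfact_succ 0, qfact_zero]
  simp only [qnum_eq', r_eq, div_pow, zq]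
  have h3 : q^(j+1) = q^j * q := pow_succ q j
  have h4 : q^(2*j+1) = (q^j)^2 * q := by
    rw [show 2*j+1 = j*2 + 1 by ring, pow_add, pow_mul, pow_one]
  have h5 : q^(2*j+2) = (q^j)^2 * q^2 := by
    rw [show 2*j+2 = j*2 + 2 by ring, pow_add, pow_mul]
  have h6 : q^(2*(2*j+1)) = (q^j)^4 * q^2 := by
    rw [show 2*(2*j+1) = j*4 + 2 by ring, pow_add, pow_mul]
  have h7 : q^(2*(2*j+2)) = (q^j)^4 * q^4 := by
    rw [show 2*(2*j+2) = j*4 + 4 by ring, pow_add, pow_mul]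
  have h8 : q^(2*(j+1)) = (q^j)^2 * q^2 := by
    rw [show 2*(j+1) = j*2 + 2 by ring, pow_add, pow_mul]
  have h11 : ((q:RatFunc ℚ)^2-1)^(j+1) = (q^2-1)^j * (q^2-1) := pow_succ _ j
  have h12 : ((-1:RatFunc ℚ))^(j+1) = (-1)^j * (-1) := pow_succ _ j
  simp only [h3, h4, h5, h6, h7, h8, h11, h12, pow_one, mul_one, one_mul]
  have hy : (q:RatFunc ℚ)^j ≠ 0 := pow_ne_zero _ q_ne_zero
  have hT : (q:RatFunc ℚ)^(j*(j+1)/2) ≠ 0 := pow_ne_zero _ q_ne_zero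
  have hz3 : ((q:RatFunc ℚ)^j)^2*q^2 - 1 ≠ 0 := by
    rw [← pow_mul, ← pow_add]; exact qpow_sub_one (by omega)
  have hfj := qfact_ne_zero j
  have hfm := qfact_ne_zero (2*j)
  have hq := q_ne_zero
  have hs := q_sq_ne_one
  generalize hyg : (q:RatFunc ℚ)^j = y at hy hz3 ⊢
  generalize hTg : (q:RatFunc ℚ)^(j*(j+1)/2) = T at hT ⊢
  generalize hEg : ((q:RatFunc ℚ)^2-1)^j = E
  generalize hGg : ((-1:RatFunc ℚ))^j = G
  generalize hFjg : qfact j = Fj at hfj ⊢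
  generalize hFmg : qfact (2*j) = Fm at hfm ⊢
  rw [show (1:RatFunc ℚ) - (y^4*q^2)⁻¹ = (y^4*q^2 - 1)/(y^4*q^2) from by
    field_simp [hy, q_ne_zero]]
  simp only [inv_eq_one_div, div_mul_div_comm, mul_div_assoc', div_div_eq_mul_div, div_div,
    div_mul_eq_mul_div, mul_one, one_mul]
  rw [div_add_div _ _
    (by repeat first | assumption | exact one_ne_zero | apply mul_ne_zero | apply pow_ne_zero)
    (by repeat first | assumption | exact one_ne_zero | apply mul_ne_zero | apply pow_ne_zero),
    div_eq_div_iff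
    (by repeat first | assumption | exact one_ne_zero | apply mul_ne_zero | apply pow_ne_zero)
    (by repeat first | assumption | exact one_ne_zero | apply mul_ne_zero | apply pow_ne_zero)]
  ring

lemma S_zero (m : ℕ) : S m 0 = 1 := by
  simp [S, qfact_zero, div_self (qfact_ne_zero m)]

lemma sum_extend {β : Type*} [AddCommMonoid β] {K K' : ℕ} (h : K ≤ K') (P : ℕ → Prop)
    [DecidablePred P] (hP : ∀ k, k < K → P k) (hP' : ∀ k, K ≤ k → ¬ P k) (g : ℕ → β) :
    (∑ k ∈ range K, g k) = ∑ k ∈ range K', if P k then g k else 0 := by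
  have h1 : (∑ k ∈ range K, g k) = ∑ k ∈ range K, if P k then g k else 0 :=
    Finset.sum_congr rfl fun k hk => (if_pos (hP k (Finset.mem_range.mp hk))).symm
  rw [h1]
  apply Finset.sum_subset (Finset.range_subset_range.mpr h)
  intro k hk hk'
  exact if_neg (hP' k (le_of_not_gt fun hc => hk' (Finset.mem_range.mpr hc)))

/-- the polynomials `v_m` defined from the `w_m` by the explicit
formula with `η(k) = (q-q^{-1})^k q^{-k(k+1)/2} B^k` satisfy the recursion
`x v_m = v_{m+1} + B (1 - q^{-2m}) v_{m-1}` with `v_0 = 1`, `v_1 = x`. -/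
theorem stmt2 {M : Type*} [CommRing M] [Algebra (RatFunc ℚ) M] (B : M)
    (w : ℕ → Polynomial M)
    (hw0 : w 0 = 1) (hw1 : w 1 = X)
    (hwrec : ∀ m : ℕ, 1 ≤ m →
      X * w m = w (m + 1) + C ((1 - q ^ (2 * m)) • B) * w (m - 1))
    (v : ℕ → Polynomial M)
    (hv : ∀ m : ℕ, v m = ∑ k ∈ range (m / 2 + 1),
      C ((((-1 : RatFunc ℚ) ^ k * q ^ k * ((q - q⁻¹) ^ k * q ^ (-((k * (k + 1) / 2 : ℕ) : ℤ))) *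
        (qfact m / (qfact (m - 2 * k) * qfact k)))) • B ^ k) * w (m - 2 * k)) :
    v 0 = 1 ∧ v 1 = X ∧ ∀ m : ℕ, 1 ≤ m →
      X * v m = v (m + 1) + C ((1 - q ^ (-((2 * m : ℕ) : ℤ))) • B) * v (m - 1) := by
  have hS : ∀ m, v m = ∑ k ∈ range (m / 2 + 1), C (S m k • B ^ k) * w (m - 2 * k) := by
    intro m
    rw [hv m]
    simp only [S]
  refine ⟨?_, ?_, ?_⟩
  · rw [hS]
    norm_num [Finset.sum_range_one, S_zero, hw0]
  · rw [hS]
    norm_num [Finset.sum_range_one, S_zero, hw1]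
  intro m hm
  have hXw : ∀ k, 2*k ≤ m → X * w (m - 2*k)
      = w (m - 2*k + 1) + C ((1 - q^(2*(m - 2*k))) • B) * w (m - 2*k - 1) := by
    intro k hk
    rcases Nat.eq_zero_or_pos (m - 2*k) with h0 | h1
    · rw [h0]
      simp [hw0, hw1]
    · exact hwrec _ h1
  have keyB : ∀ k ∈ range (m/2+1), C (S m k • B^k) * (X * w (m - 2*k)) =
      C (S m k • B^k) * w (m - 2*k + 1)
        + C (((1 - q^(2*(m - 2*k))) * S m k) • B^(k+1)) * w (m - 2*k - 1) := by
    intro k hk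
    rw [hXw k (by have := Finset.mem_range.mp hk; omega), mul_add]
    congr 1
    rw [← mul_assoc, ← C_mul, smul_mul_smul_comm, ← pow_succ, mul_comm (S m k)]
  have E1 : (∑ k ∈ range (m/2+1), C (S m k • B^k) * w (m - 2*k + 1))
      = ∑ k ∈ range (m/2+2), if 2*k ≤ m then C (S m k • B^k) * w (m - 2*k + 1) else 0 :=
    sum_extend (by omega) _ (fun k hk => by omega) (fun k hk => by omega) _
  have E2 : (∑ k ∈ range (m/2+1),
        C (((1 - q^(2*(m - 2*k))) * S m k) • B^(k+1)) * w (m - 2*k - 1))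
      = ∑ k ∈ range (m/2+2), if k = 0 then 0 else
          C (((1 - q^(2*(m - 2*(k-1)))) * S m (k-1)) • B^((k-1)+1)) * w (m - 2*(k-1) - 1) := by
    rw [Finset.sum_range_succ' (fun k => if k = 0 then 0 else
      C (((1 - q^(2*(m - 2*(k-1)))) * S m (k-1)) • B^((k-1)+1)) * w (m - 2*(k-1) - 1)) (m/2+1)]
    simp
  have hL : X * v m = ∑ k ∈ range (m/2+2),
      ((if 2*k ≤ m then C (S m k • B^k) * w (m - 2*k + 1) else 0)
        + (if k = 0 then 0 else
            C (((1 - q^(2*(m - 2*(k-1)))) * S m (k-1)) • B^((k-1)+1)) * w (m - 2*(k-1) - 1))) := by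
    rw [hS m, Finset.mul_sum]
    rw [Finset.sum_congr rfl (fun k _ => by ring :
      ∀ k ∈ range (m/2+1), X * (C (S m k • B^k) * w (m - 2*k))
        = C (S m k • B^k) * (X * w (m - 2*k)))]
    rw [Finset.sum_congr rfl keyB, Finset.sum_add_distrib, E1, E2, ← Finset.sum_add_distrib]
  have hR : v (m+1) + C ((1 - q ^ (-((2 * m : ℕ) : ℤ))) • B) * v (m-1)
      = ∑ k ∈ range (m/2+2),
        ((if 2*k ≤ m+1 then C (S (m+1) k • B^k) * w (m+1 - 2*k) else 0)
          + (if k = 0 then 0 else if 2*(k-1) ≤ m-1 then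
              C ((1 - q ^ (-((2 * m : ℕ) : ℤ))) • B)
                * (C (S (m-1) (k-1) • B^(k-1)) * w (m-1 - 2*(k-1))) else 0)) := by
    rw [hS (m+1), hS (m-1), Finset.mul_sum, Finset.sum_add_distrib]
    congr 1
    · rw [show (m+1)/2 + 1 = (m+1)/2 + 1 from rfl]
      exact sum_extend (by omega) _ (fun k hk => by omega) (fun k hk => by omega) _
    · rw [sum_extend (K' := m/2+1) (by omega) (fun i => 2*i ≤ m-1)
        (fun k hk => by omega) (fun k hk => by omega)]
      rw [Finset.sum_range_succ' (fun k => if k = 0 then 0 else if 2*(k-1) ≤ m-1 then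
        C ((1 - q ^ (-((2 * m : ℕ) : ℤ))) • B)
          * (C (S (m-1) (k-1) • B^(k-1)) * w (m-1 - 2*(k-1))) else 0) (m/2+1)]
      simp
  rw [hL, hR]
  apply Finset.sum_congr rfl
  intro k _
  match k with
  | 0 =>
    rw [if_pos (by omega : 2*0 ≤ m), if_pos (by omega : 2*0 ≤ m+1), if_pos rfl, if_pos rfl,
      S_zero, S_zero, show m - 2*0 + 1 = m+1 by omega, show m+1-2*0 = m+1 by omega]
  | i+1 =>
    rw [if_neg (Nat.succ_ne_zero i), if_neg (Nat.succ_ne_zero i),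
      show (i+1)-1 = i from rfl]
    rcases lt_trichotomy (2*(i+1)) (m+1) with hlt | heq | hgt
    · have h2 : 2*(i+1) ≤ m := by omega
      obtain ⟨d, rfl⟩ : ∃ d, m = d + 2*i + 2 := ⟨m - (2*i+2), by omega⟩
      rw [if_pos h2, if_pos (by omega : 2*(i+1) ≤ (d+2*i+2)+1),
        if_pos (by omega : 2*i ≤ (d+2*i+2)-1),
        show d+2*i+2 - 2*(i+1) + 1 = d+1 by omega,
        show d+2*i+2 - 2*i - 1 = d+1 by omega,
        show d+2*i+2 - 2*i = d+2 by omega,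
        show d+2*i+2+1 - 2*(i+1) = d+1 by omega,
        show d+2*i+2+1 = d+2*i+3 by omega,
        show d+2*i+2-1 = d+2*i+1 by omega,
        show d+2*i+1 - 2*i = d+1 by omega]
      rw [← mul_assoc, ← C_mul, smul_mul_smul_comm, ← pow_succ',
        ← add_mul, ← add_mul, ← C_add, ← C_add, ← add_smul, ← add_smul, key_main d i]
    · obtain rfl : m = 2*i+1 := by omega
      rw [if_neg (by omega : ¬ 2*(i+1) ≤ 2*i+1), if_pos (by omega : 2*(i+1) ≤ (2*i+1)+1),
        if_pos (by omega : 2*i ≤ (2*i+1)-1),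
        show 2*i+1 - 2*i - 1 = 0 by omega,
        show 2*i+1 - 2*i = 1 by omega,
        show 2*i+1+1 - 2*(i+1) = 0 by omega,
        show 2*i+1+1 = 2*i+2 by omega,
        show 2*i+1-1 = 2*i by omega,
        show 2*i - 2*i = 0 by omega]
      rw [← mul_assoc, ← C_mul, smul_mul_smul_comm, ← pow_succ',
        zero_add, key_bdry i, add_smul, C_add, add_mul]
    · rw [if_neg (by omega : ¬ 2*(i+1) ≤ m), if_neg (by omega : ¬ 2*(i+1) ≤ m+1),
        if_neg (by omega : ¬ 2*i ≤ m-1),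
        show m - 2*i = 0 by omega]
      simp
end
end

section
/- For the deformed Chebyshev polynomials C_n(x;q,r) (defined by C_0=1, C_1=2x, C_{n+1} = 2x C_n − ((r^{-1}−q^{n+1})/(1−q^{n+1})) C_{n-1}), the rescaled polynomial (1−q^2)(1−q^3)⋯(1−q^n) · C_n(x;q,r) lies in ℤ[x, q, r^{-1}] for all n ≥ 2. -/
open Polynomial

set_option maxHeartbeats 1000000
set_option synthInstance.maxHeartbeats 2000000

noncomputable section

/-- The field `ℚ(q, s)` where `s = r⁻¹`, realized as the fraction field of
`ℤ[q, s]`. -/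
abbrev K7 : Type := FractionRing (MvPolynomial (Fin 2) ℤ)

/-- The indeterminate `q`. -/
def q7 : K7 := algebraMap (MvPolynomial (Fin 2) ℤ) K7 (MvPolynomial.X 0)

/-- The indeterminate `s = r⁻¹`. -/
def s7 : K7 := algebraMap (MvPolynomial (Fin 2) ℤ) K7 (MvPolynomial.X 1)

lemma hq7 (k : ℕ) (hk : 1 ≤ k) : (1 : K7) - q7 ^ k ≠ 0 := by
  intro h
  have h2 : algebraMap (MvPolynomial (Fin 2) ℤ) K7
      (1 - (MvPolynomial.X 0) ^ k) = 0 := by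
    simpa [q7, map_sub, map_one, map_pow] using h
  have h3 : (1 - (MvPolynomial.X 0 : MvPolynomial (Fin 2) ℤ) ^ k) = 0 := by
    have := IsFractionRing.injective (MvPolynomial (Fin 2) ℤ) K7
    exact this (by simpa using h2)
  have h4 := congrArg (MvPolynomial.eval (fun _ => (0 : ℤ))) h3
  simp [zero_pow (by omega : k ≠ 0)] at h4

/-- multiplying the deformed Chebyshev polynomial `C_n(x;q,r)` by
`(1-q^2)⋯(1-q^n)` clears all denominators: the result is the image of a
polynomial with coefficients in `ℤ[q, r⁻¹]`. -/
theorem stmt7 (Ch : ℕ → Polynomial K7)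
    (h0 : Ch 0 = 1) (h1 : Ch 1 = 2 * X)
    (hrec : ∀ n : ℕ, 1 ≤ n → Ch (n + 1) =
      2 * X * Ch n - C ((s7 - q7 ^ (n + 1)) / (1 - q7 ^ (n + 1))) * Ch (n - 1)) :
    ∀ n : ℕ, 2 ≤ n → ∃ P : Polynomial (MvPolynomial (Fin 2) ℤ),
      P.map (algebraMap (MvPolynomial (Fin 2) ℤ) K7) =
        C (∏ j ∈ Finset.Icc 2 n, (1 - q7 ^ j)) * Ch n := by
  set A := MvPolynomial (Fin 2) ℤ
  set φ := algebraMap A K7 with hφ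
  have hφq : ∀ k : ℕ, φ (1 - (MvPolynomial.X 0) ^ k) = 1 - q7 ^ k := by
    intro k; simp [q7, map_sub, map_one, map_pow]; rfl
  have hφs : ∀ k : ℕ, φ (MvPolynomial.X 1 - (MvPolynomial.X 0) ^ k)
      = s7 - q7 ^ k := by
    intro k; simp [q7, s7, map_sub, map_pow]; rfl
  have key : ∀ n : ℕ, 1 ≤ n →
      (∃ P : Polynomial A, P.map φ =
        C (∏ j ∈ Finset.Icc 2 n, (1 - q7 ^ j)) * Ch n) ∧
      (∃ P : Polynomial A, P.map φ =
        C (∏ j ∈ Finset.Icc 2 (n + 1), (1 - q7 ^ j)) * Ch (n + 1)) := by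
    intro n hn
    induction n, hn using Nat.le_induction with
    | base =>
      constructor
      · refine ⟨2 * X, ?_⟩
        simp [h1, Finset.Icc_self, Finset.Icc_eq_empty_of_lt]
      · refine ⟨Polynomial.C (1 - (MvPolynomial.X 0) ^ 2) * (2 * X) * (2 * X)
            - Polynomial.C (MvPolynomial.X 1 - (MvPolynomial.X 0) ^ 2), ?_⟩
        have h2 := hrec 1 le_rfl
        simp only [h0, h1] at h2
        rw [h2]
        have hProd : (∏ j ∈ Finset.Icc 2 2, ((1 : K7) - q7 ^ j)) = 1 - q7 ^ 2 := by
          simp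
        rw [hProd]
        simp only [Polynomial.map_sub, Polynomial.map_mul, Polynomial.map_C,
          Polynomial.map_ofNat, Polynomial.map_X, hφq, hφs]
        norm_num
        set d : K7 := (s7 - q7 ^ 2) / (1 - q7 ^ 2) with hd
        have hcd : (C d : Polynomial K7) * (1 - C q7 ^ 2) = C s7 - C q7 ^ 2 := by
          rw [← C_pow, ← C_1, ← C_sub, ← C_mul, hd,
            div_mul_cancel₀ _ (hq7 2 (by norm_num)), C_sub, C_pow]
        rw [← hcd]
        ring
    | succ n hn ih =>
      obtain ⟨⟨P0, hP0⟩, ⟨P1, hP1⟩⟩ := ih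
      refine ⟨⟨P1, hP1⟩, ?_⟩
      refine ⟨Polynomial.C (1 - (MvPolynomial.X 0) ^ (n + 2)) * (2 * X) * P1
          - Polynomial.C ((MvPolynomial.X 1 - (MvPolynomial.X 0) ^ (n + 2)) *
              (1 - (MvPolynomial.X 0) ^ (n + 1))) * P0, ?_⟩
      have h2 := hrec (n + 1) (by omega)
      simp only [Nat.add_sub_cancel] at h2
      have hProd2 : (∏ j ∈ Finset.Icc 2 (n + 1 + 1), ((1 : K7) - q7 ^ j))
          = (∏ j ∈ Finset.Icc 2 (n + 1), ((1 : K7) - q7 ^ j)) * (1 - q7 ^ (n + 2)) := by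
        rw [← Finset.prod_Icc_succ_top (by omega : 2 ≤ n + 1 + 1)]
      have hProd1 : (∏ j ∈ Finset.Icc 2 (n + 1), ((1 : K7) - q7 ^ j))
          = (∏ j ∈ Finset.Icc 2 n, ((1 : K7) - q7 ^ j)) * (1 - q7 ^ (n + 1)) := by
        rw [← Finset.prod_Icc_succ_top (by omega : 2 ≤ n + 1)]
      rw [h2, hProd2, hProd1]
      simp only [Polynomial.map_sub, Polynomial.map_mul, Polynomial.map_C,
        Polynomial.map_ofNat, Polynomial.map_X, hφq, hφs, hP0, hP1, hProd1, C_mul]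
      have hnn : n + 1 + 1 = n + 2 := rfl
      rw [hnn]
      set d : K7 := (s7 - q7 ^ (n + 2)) / (1 - q7 ^ (n + 2)) with hd
      rw [show s7 - q7 ^ (n + 2) = d * (1 - q7 ^ (n + 2)) by
        rw [hd, div_mul_cancel₀ _ (hq7 (n + 2) (by omega))], C_mul]
      ring
  intro n hn
  obtain ⟨m, rfl⟩ : ∃ m, n = m + 1 := ⟨n - 1, by omega⟩
  exact (key m (by omega)).2
end
end

section
/- Define H_{m,n}(x,y;q,r) by H_{0,n}(x,y;q,r) = H_n(y;q) and the recursion 2x H_{m,n} = H_{m+1,n} + (1−q^m)H_{m-1,n} + q^m(1−q^n) r H_{m,n-1} (with H_{-1,n} = H_{m,-1} = 0). Then for all m,n ∈ ℕ, H_{m,n}(x,x;q,1) = H_{m+n}(x;q), where H_k(x;q) are the continuous q-Hermite polynomials. -/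
open Polynomial

/-- specializing the bivariate continuous q-Hermite polynomials at
`r = 1` and `y = x` gives `H_{m,n}(x,x;q,1) = H_{m+n}(x;q)`. -/
theorem stmt16 (r : RatFunc ℚ) (hr : r = 1)
    (H : ℕ → Polynomial (RatFunc ℚ))
    (h0 : H 0 = 1) (h1 : H 1 = 2 * X)
    (hrec : ∀ k : ℕ, 1 ≤ k →
      2 * X * H k = H (k + 1) + C (1 - (RatFunc.X : RatFunc ℚ) ^ k) * H (k - 1))
    (Hb : ℕ → ℕ → MvPolynomial (Fin 2) (RatFunc ℚ))
    (hHb0 : ∀ n, Hb 0 n =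
      Polynomial.aeval (MvPolynomial.X 1 : MvPolynomial (Fin 2) (RatFunc ℚ)) (H n))
    (hHbrec : ∀ m n : ℕ,
      2 * MvPolynomial.X 0 * Hb m n =
        Hb (m + 1) n
        + (if m = 0 then 0 else
            MvPolynomial.C (1 - (RatFunc.X : RatFunc ℚ) ^ m) * Hb (m - 1) n)
        + (if n = 0 then 0 else
            MvPolynomial.C ((RatFunc.X : RatFunc ℚ) ^ m *
              (1 - (RatFunc.X : RatFunc ℚ) ^ n) * r) * Hb m (n - 1))) :
    ∀ m n : ℕ,
      MvPolynomial.aeval (fun _ : Fin 2 => (X : Polynomial (RatFunc ℚ))) (Hb m n)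
        = H (m + n) := by
  subst hr
  -- uniform univariate recursion
  have huni : ∀ k : ℕ, 2 * X * H k =
      H (k + 1) + (if k = 0 then 0 else
        C (1 - (RatFunc.X : RatFunc ℚ) ^ k) * H (k - 1)) := by
    intro k
    rcases Nat.eq_zero_or_pos k with hk | hk
    · subst hk; simp [h0, h1]
    · rw [if_neg (by omega)]; exact hrec k hk
  intro m
  induction m using Nat.strong_induction_on with
  | _ m ih =>
    match m with
    | 0 =>
      intro n
      rw [hHb0, ← Polynomial.aeval_algHom_apply]
      simp
    | Nat.succ m =>
      intro n
      have key := congrArg (MvPolynomial.aeval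
        (fun _ : Fin 2 => (X : Polynomial (RatFunc ℚ)))) (hHbrec m n)
      simp only [map_add, map_mul, map_ofNat, MvPolynomial.aeval_X, apply_ite
        (MvPolynomial.aeval (fun _ : Fin 2 => (X : Polynomial (RatFunc ℚ)))),
        map_zero, MvPolynomial.aeval_C, Polynomial.algebraMap_eq] at key
      rw [ih m (Nat.lt_succ_self m) n] at key
      have hS : (if m = 0 then 0 else
          C (1 - (RatFunc.X : RatFunc ℚ) ^ m) *
            (MvPolynomial.aeval (fun _ : Fin 2 => (X : Polynomial (RatFunc ℚ))))
              (Hb (m - 1) n))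
        + (if n = 0 then 0 else
          C ((RatFunc.X : RatFunc ℚ) ^ m * (1 - (RatFunc.X : RatFunc ℚ) ^ n) * 1) *
            (MvPolynomial.aeval (fun _ : Fin 2 => (X : Polynomial (RatFunc ℚ))))
              (Hb m (n - 1)))
        = (if m + n = 0 then 0 else
            C (1 - (RatFunc.X : RatFunc ℚ) ^ (m + n)) * H (m + n - 1)) := by
        rcases Nat.eq_zero_or_pos m with hm0 | hm0
        · subst hm0
          rcases Nat.eq_zero_or_pos n with hn0 | hn0
          · subst hn0; simp
          · rw [if_pos rfl, if_neg (by omega), if_neg (by omega), zero_add,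
              ih 0 (Nat.lt_succ_self 0) (n - 1)]
            norm_num
        · rcases Nat.eq_zero_or_pos n with hn0 | hn0
          · subst hn0
            rw [if_neg (by omega), if_pos rfl, if_neg (by omega), add_zero,
              ih (m - 1) (by omega) 0]
            norm_num
          · rw [if_neg (by omega), if_neg (by omega), if_neg (by omega),
              ih (m - 1) (by omega) n, ih m (Nat.lt_succ_self m) (n - 1)]
            have e1 : m - 1 + n = m + n - 1 := by omega
            have e2 : m + (n - 1) = m + n - 1 := by omega
            rw [e1, e2, ← add_mul, ← C_add]
            congr 1
            rw [show (RatFunc.X : RatFunc ℚ) ^ (m + n) = RatFunc.X ^ m * RatFunc.X ^ n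
              from (pow_add _ _ _)]
            ring
      simp only [C_1, mul_one, ← C_mul] at key hS
      rw [show m.succ + n = m + n + 1 from by omega]
      linear_combination (huni (m + n)) - key - hS
end

section
/- The bivariate continuous q-Hermite polynomials admit the expansion H_{m,n}(x,y;q,r) = Σ_{k=0}^{min(m,n)} ((-1)^k q^{k(k-1)/2} (q;q)_m (q;q)_n r^k)/((q;q)_{m-k}(q;q)_{n-k}(q;q)_k) · H_{m-k}(x;q) H_{n-k}(y;q), where H_j(x;q) are the univariate continuous q-Hermite polynomials. -/
open Polynomial Finset
noncomputable section
abbrev K17 : Type := RatFunc (RatFunc ℚ)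
def q17 : K17 := RatFunc.C (RatFunc.X : RatFunc ℚ)
def r17 : K17 := RatFunc.X
def poch17 (k : ℕ) : K17 := ∏ j ∈ Icc 1 k, (1 - q17 ^ j)

lemma q17_pow_ne_one {j : ℕ} (hj : 1 ≤ j) : q17 ^ j ≠ 1 := by
  intro h
  have hX : (RatFunc.X : RatFunc ℚ) ^ j = 1 := by
    have : RatFunc.C ((RatFunc.X : RatFunc ℚ) ^ j) = RatFunc.C 1 := by
      simpa [q17, map_pow] using h
    exact (RatFunc.C (K := RatFunc ℚ)).injective this
  have hX2 : (Polynomial.X : ℚ[X]) ^ j = 1 := by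
    have : algebraMap ℚ[X] (RatFunc ℚ) (Polynomial.X ^ j) = algebraMap ℚ[X] (RatFunc ℚ) 1 := by
      simpa [map_pow, RatFunc.algebraMap_X] using hX
    exact RatFunc.algebraMap_injective ℚ this
  have := congrArg Polynomial.natDegree hX2
  simp [Polynomial.natDegree_X_pow] at this
  omega

lemma one_sub_q17_pow_ne {j : ℕ} (hj : 1 ≤ j) : (1 : K17) - q17 ^ j ≠ 0 :=
  sub_ne_zero.mpr (Ne.symm (q17_pow_ne_one hj))

lemma poch17_ne (k : ℕ) : poch17 k ≠ 0 := by
  rw [poch17]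
  exact Finset.prod_ne_zero_iff.mpr fun j hj => one_sub_q17_pow_ne (mem_Icc.mp hj).1

lemma poch17_zero : poch17 0 = 1 := by simp [poch17]

lemma poch17_succ (k : ℕ) : poch17 (k + 1) = poch17 k * (1 - q17 ^ (k + 1)) := by
  rw [poch17, poch17, Finset.prod_Icc_succ_top (by omega)]

lemma tri17 (j : ℕ) : (j + 1) * j / 2 = j * (j - 1) / 2 + j := by
  cases j with
  | zero => rfl
  | succ i =>
    have h : (i + 1 + 1) * (i + 1) = (i + 1) * i + 2 * (i + 1) := by ring
    rw [h, Nat.add_mul_div_left _ _ (by norm_num : 0 < 2)]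
    simp

/-- coefficient in the expansion -/
def c17 (m n k : ℕ) : K17 :=
  ((-1 : K17) ^ k * q17 ^ (k * (k - 1) / 2) * poch17 m * poch17 n * r17 ^ k) /
    (poch17 (m - k) * poch17 (n - k) * poch17 k)

lemma c17_zero (m n : ℕ) : c17 m n 0 = 1 := by
  rw [c17]
  simp only [pow_zero, Nat.zero_mul, Nat.zero_div, Nat.zero_sub, Nat.sub_zero, one_mul, mul_one,
    poch17_zero]
  exact div_self (mul_ne_zero (poch17_ne m) (poch17_ne n))

lemma lemA (m n k : ℕ) (hk1 : 1 ≤ k) (hkm : k ≤ m) (hkn : k ≤ n) :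
    c17 m n k = c17 (m + 1) n k
      + q17 ^ m * (1 - q17 ^ n) * r17 * c17 m (n - 1) (k - 1) := by
  obtain ⟨j, rfl⟩ := Nat.exists_eq_add_of_le hk1
  obtain ⟨a, rfl⟩ := Nat.exists_eq_add_of_le hkm
  obtain ⟨b, rfl⟩ := Nat.exists_eq_add_of_le hkn
  simp only [c17, Nat.add_sub_cancel, Nat.add_sub_cancel_left]
  have e1 : 1 + j + a - (1 + j) = a := by omega
  have e2 : 1 + j + b - (1 + j) = b := by omega
  have e3 : 1 + j + a + 1 - (1 + j) = a + 1 := by omega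
  have e4 : 1 + j + b - 1 = j + b := by omega
  have e5 : 1 + j - 1 = j := by omega
  have e6 : j + b - j = b := by omega
  have e7 : 1 + j + a - j = a + 1 := by omega
  rw [e3, e4, e6, e7]
  have t1 : (1 + j) * j / 2 = j * (j - 1) / 2 + j := by
    rw [show (1 + j) * j = (j + 1) * j by ring]; exact tri17 j
  rw [t1]
  have p1 : poch17 (1 + j + a + 1) = poch17 (1 + j + a) * (1 - q17 ^ (1 + j + a + 1)) :=
    poch17_succ _
  have p2 : poch17 (a + 1) = poch17 a * (1 - q17 ^ (a + 1)) := poch17_succ _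
  have p3 : poch17 (1 + j + b) = poch17 (j + b) * (1 - q17 ^ (j + b + 1)) := by
    rw [show 1 + j + b = (j + b) + 1 by omega]; exact poch17_succ _
  have p4 : poch17 (1 + j) = poch17 j * (1 - q17 ^ (j + 1)) := by
    rw [show 1 + j = j + 1 by omega]; exact poch17_succ _
  have pe1 : q17 ^ (1 + j + b) = q17 ^ (j + b + 1) := by ring_nf
  rw [p1, p2, p3, p4, pe1]
  have n1 := poch17_ne a
  have n2 := poch17_ne b
  have n3 := poch17_ne j
  have n4 := poch17_ne (1 + j + a)
  have n5 := poch17_ne (j + b)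
  have n6 := one_sub_q17_pow_ne (j := a + 1) (by omega)
  have n7 := one_sub_q17_pow_ne (j := j + 1) (by omega)
  rw [← mul_div_assoc, div_add_div _ _
    (mul_ne_zero (mul_ne_zero (mul_ne_zero n1 n6) n2) (mul_ne_zero n3 n7))
    (mul_ne_zero (mul_ne_zero (mul_ne_zero n1 n6) n2) n3),
    div_eq_div_iff (mul_ne_zero (mul_ne_zero n1 n2) (mul_ne_zero n3 n7))
      (mul_ne_zero (mul_ne_zero (mul_ne_zero (mul_ne_zero n1 n6) n2) (mul_ne_zero n3 n7))
        (mul_ne_zero (mul_ne_zero (mul_ne_zero n1 n6) n2) n3))]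
  ring

lemma lemAtop (m b : ℕ) :
    c17 (m + 1) (b + m + 1) (m + 1)
      + q17 ^ m * (1 - q17 ^ (b + m + 1)) * r17 * c17 m (b + m) m = 0 := by
  simp only [c17, Nat.add_sub_cancel, Nat.sub_self]
  have e1 : b + m + 1 - (m + 1) = b := by omega
  have e2 : m + 1 - 1 = m := by omega
  have e3 : b + m - m = b := by omega
  have t1 : (m + 1) * m / 2 = m * (m - 1) / 2 + m := tri17 m
  rw [t1]
  have p1 : poch17 (b + m + 1) = poch17 (b + m) * (1 - q17 ^ (b + m + 1)) := poch17_succ _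
  have p2 : poch17 (m + 1) = poch17 m * (1 - q17 ^ (m + 1)) := poch17_succ _
  rw [p1, p2, poch17_zero]
  have n1 := poch17_ne b
  have n2 := poch17_ne m
  have n3 := poch17_ne (b + m)
  have n4 := one_sub_q17_pow_ne (j := m + 1) (by omega)
  rw [e1, ← mul_div_assoc, div_add_div _ _
    (mul_ne_zero (mul_ne_zero one_ne_zero n1) (mul_ne_zero n2 n4))
    (mul_ne_zero (mul_ne_zero one_ne_zero n1) n2),
    _root_.div_eq_zero_iff]
  left
  ring

lemma lemB (m n k : ℕ) (hkm : k ≤ m) (hkn : k ≤ n) :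
    c17 (m + 1) n k * (1 - q17 ^ (m + 1 - k)) = (1 - q17 ^ (m + 1)) * c17 m n k := by
  obtain ⟨a, rfl⟩ := Nat.exists_eq_add_of_le hkm
  obtain ⟨b, rfl⟩ := Nat.exists_eq_add_of_le hkn
  simp only [c17]
  have e1 : k + a + 1 - k = a + 1 := by omega
  have e2 : k + b - k = b := by omega
  have e3 : k + a - k = a := by omega
  rw [e1, e2, e3]
  have p1 : poch17 (k + a + 1) = poch17 (k + a) * (1 - q17 ^ (k + a + 1)) := poch17_succ _
  have p2 : poch17 (a + 1) = poch17 a * (1 - q17 ^ (a + 1)) := poch17_succ _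
  rw [p1, p2]
  have n1 := poch17_ne a
  have n2 := poch17_ne b
  have n3 := poch17_ne k
  have n4 := poch17_ne (k + a)
  have n5 := poch17_ne (k + b)
  have n6 := one_sub_q17_pow_ne (j := a + 1) (by omega)
  rw [div_mul_eq_mul_div, ← mul_div_assoc,
    div_eq_div_iff (mul_ne_zero (mul_ne_zero (mul_ne_zero n1 n6) n2) n3)
      (mul_ne_zero (mul_ne_zero n1 n2) n3)]
  ring

/-- expansion sum -/
def S17 (G Gy : ℕ → MvPolynomial (Fin 2) K17) (m n : ℕ) : MvPolynomial (Fin 2) K17 :=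
  ∑ k ∈ range (min m n + 1), MvPolynomial.C (c17 m n k) * G (m - k) * Gy (n - k)

lemma key17 (G Gy : ℕ → MvPolynomial (Fin 2) K17)
    (hG : ∀ j : ℕ, 2 * MvPolynomial.X 0 * G j
      = G (j + 1) + MvPolynomial.C (1 - q17 ^ j) * G (j - 1)) (m n : ℕ) :
    2 * MvPolynomial.X 0 * S17 G Gy m n
      = S17 G Gy (m + 1) n
        + (if m = 0 then 0 else MvPolynomial.C (1 - q17 ^ m) * S17 G Gy (m - 1) n)
        + (if n = 0 then 0 else
            MvPolynomial.C (q17 ^ m * (1 - q17 ^ n) * r17) * S17 G Gy m (n - 1)) := by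
  have expand : 2 * MvPolynomial.X 0 * S17 G Gy m n
      = (∑ k ∈ range (min m n + 1),
          MvPolynomial.C (c17 m n k) * G (m - k + 1) * Gy (n - k))
        + (∑ k ∈ range (min m n + 1),
          MvPolynomial.C (c17 m n k * (1 - q17 ^ (m - k))) * G (m - k - 1) * Gy (n - k)) := by
    rw [S17, Finset.mul_sum, ← Finset.sum_add_distrib]
    refine Finset.sum_congr rfl fun k _ => ?_
    have h := hG (m - k)
    calc 2 * MvPolynomial.X 0 * (MvPolynomial.C (c17 m n k) * G (m - k) * Gy (n - k))
        = MvPolynomial.C (c17 m n k) * (2 * MvPolynomial.X 0 * G (m - k)) * Gy (n - k) := by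
          ring
      _ = _ := by rw [h, map_mul]; ring
  have hSB : (∑ k ∈ range (min m n + 1),
        MvPolynomial.C (c17 m n k * (1 - q17 ^ (m - k))) * G (m - k - 1) * Gy (n - k))
      = if m = 0 then 0 else MvPolynomial.C (1 - q17 ^ m) * S17 G Gy (m - 1) n := by
    cases m with
    | zero => simp [S17]
    | succ m' =>
      rw [if_neg (Nat.succ_ne_zero m')]
      have hsub : range (min m' n + 1) ⊆ range (min (m' + 1) n + 1) := by
        apply Finset.range_subset_range.mpr; omega
      have hvan : ∀ k ∈ range (min (m' + 1) n + 1), k ∉ range (min m' n + 1) →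
          MvPolynomial.C (c17 (m' + 1) n k * (1 - q17 ^ (m' + 1 - k)))
            * G (m' + 1 - k - 1) * Gy (n - k) = 0 := by
        intro k hk hk'
        simp only [Finset.mem_range] at hk hk'
        have hz : m' + 1 - k = 0 := by omega
        rw [hz]
        simp
      rw [← Finset.sum_subset hsub hvan]
      have : S17 G Gy (m' + 1 - 1) n = S17 G Gy m' n := by norm_num
      rw [this, S17, Finset.mul_sum]
      refine Finset.sum_congr rfl fun k hk => ?_
      simp only [Finset.mem_range] at hk
      have hkm : k ≤ m' := by omega
      have hkn : k ≤ n := by omega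
      have e1 : m' + 1 - k - 1 = m' - k := by omega
      rw [e1, lemB m' n k hkm hkn, map_mul]
      ring
  have hSA : (∑ k ∈ range (min m n + 1),
        MvPolynomial.C (c17 m n k) * G (m - k + 1) * Gy (n - k))
      = S17 G Gy (m + 1) n + (if n = 0 then 0 else
          MvPolynomial.C (q17 ^ m * (1 - q17 ^ n) * r17) * S17 G Gy m (n - 1)) := by
    cases n with
    | zero => simp [S17, c17_zero]
    | succ n' =>
      rw [if_neg (Nat.succ_ne_zero n')]
      set F : ℕ → MvPolynomial (Fin 2) K17 := fun k =>
        (MvPolynomial.C (c17 (m + 1) (n' + 1) k)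
          + if k = 0 then 0 else
              MvPolynomial.C (q17 ^ m * (1 - q17 ^ (n' + 1)) * r17 * c17 m n' (k - 1)))
          * G (m + 1 - k) * Gy (n' + 1 - k) with hF
      have step1 : (∑ k ∈ range (min m (n' + 1) + 1),
            MvPolynomial.C (c17 m (n' + 1) k) * G (m - k + 1) * Gy (n' + 1 - k))
          = ∑ k ∈ range (min m (n' + 1) + 1), F k := by
        refine Finset.sum_congr rfl fun k hk => ?_
        simp only [Finset.mem_range] at hk
        have hkm : k ≤ m := by omega
        have hkn : k ≤ n' + 1 := by omega
        have e1 : m - k + 1 = m + 1 - k := by omega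
        simp only [hF]
        rw [e1]
        rcases Nat.eq_zero_or_pos k with hk0 | hk0
        · subst hk0
          rw [if_pos rfl, add_zero, c17_zero, c17_zero]
        · rw [if_neg (by omega)]
          have h := lemA m (n' + 1) k (by omega) hkm hkn
          simp only [Nat.add_sub_cancel] at h
          rw [h, map_add]
      have step2 : (∑ k ∈ range (min m (n' + 1) + 1), F k)
          = ∑ k ∈ range (min (m + 1) (n' + 1) + 1), F k := by
        apply Finset.sum_subset (by apply Finset.range_subset_range.mpr; omega)
        intro k hk hk'
        simp only [Finset.mem_range] at hk hk'
        have hk1 : k = m + 1 := by omega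
        have hmn : m ≤ n' := by omega
        subst hk1
        obtain ⟨b, hb⟩ : ∃ b, n' = b + m := ⟨n' - m, by omega⟩
        subst hb
        have h0 := lemAtop m b
        simp only [hF]
        rw [if_neg (Nat.succ_ne_zero m), Nat.add_sub_cancel,
          ← map_add, h0, map_zero, zero_mul, zero_mul]
      have step3 : (∑ k ∈ range (min (m + 1) (n' + 1) + 1), F k)
          = S17 G Gy (m + 1) (n' + 1)
            + MvPolynomial.C (q17 ^ m * (1 - q17 ^ (n' + 1)) * r17) * S17 G Gy m n' := by
        simp only [hF, add_mul]
        rw [Finset.sum_add_distrib]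
        congr 1
        have hmin : min (m + 1) (n' + 1) = min m n' + 1 := by omega
        rw [hmin, Finset.sum_range_succ', S17, Finset.mul_sum]
        simp only [Nat.succ_ne_zero, if_false, if_true, eq_self_iff_true, zero_mul, add_zero,
          Nat.succ_sub_succ, Nat.add_sub_cancel, Nat.sub_zero]
        refine Finset.sum_congr rfl fun k hk => ?_
        rw [map_mul]
        ring
      rw [step1, step2, step3]
      norm_num
  rw [expand, hSA, hSB]
  ring


/-- expansion of the bivariate continuous q-Hermite polynomials
in terms of the univariate ones. -/
theorem stmt17 (H : ℕ → Polynomial K17)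
    (h0 : H 0 = 1) (h1 : H 1 = 2 * X)
    (hrec : ∀ k : ℕ, 1 ≤ k →
      2 * X * H k = H (k + 1) + C (1 - q17 ^ k) * H (k - 1))
    (Hb : ℕ → ℕ → MvPolynomial (Fin 2) K17)
    (hHb0 : ∀ n, Hb 0 n =
      Polynomial.aeval (MvPolynomial.X 1 : MvPolynomial (Fin 2) K17) (H n))
    (hHbrec : ∀ m n : ℕ,
      2 * MvPolynomial.X 0 * Hb m n =
        Hb (m + 1) n
        + (if m = 0 then 0 else MvPolynomial.C (1 - q17 ^ m) * Hb (m - 1) n)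
        + (if n = 0 then 0 else
            MvPolynomial.C (q17 ^ m * (1 - q17 ^ n) * r17) * Hb m (n - 1))) :
    ∀ m n : ℕ, Hb m n = ∑ k ∈ range (min m n + 1),
      MvPolynomial.C (((-1 : K17) ^ k * q17 ^ (k * (k - 1) / 2) *
          poch17 m * poch17 n * r17 ^ k) /
          (poch17 (m - k) * poch17 (n - k) * poch17 k))
        * Polynomial.aeval (MvPolynomial.X 0 : MvPolynomial (Fin 2) K17) (H (m - k))
        * Polynomial.aeval (MvPolynomial.X 1 : MvPolynomial (Fin 2) K17) (H (n - k)) := by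
  have hH : ∀ j : ℕ, 2 * X * H j = H (j + 1) + C (1 - q17 ^ j) * H (j - 1) := by
    intro j
    rcases j with _ | j
    · rw [h0, h1]; simp
    · exact hrec (j + 1) (by omega)
  have hG : ∀ j : ℕ,
      2 * MvPolynomial.X 0 *
          Polynomial.aeval (MvPolynomial.X 0 : MvPolynomial (Fin 2) K17) (H j)
        = Polynomial.aeval (MvPolynomial.X 0 : MvPolynomial (Fin 2) K17) (H (j + 1))
          + MvPolynomial.C (1 - q17 ^ j) *
              Polynomial.aeval (MvPolynomial.X 0 : MvPolynomial (Fin 2) K17) (H (j - 1)) := by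
    intro j
    have h := congrArg
      (Polynomial.aeval (MvPolynomial.X 0 : MvPolynomial (Fin 2) K17)) (hH j)
    simpa [map_mul, map_add, map_ofNat, Polynomial.aeval_C, MvPolynomial.algebraMap_eq] using h
  have main : ∀ m n : ℕ, Hb m n =
      S17 (fun i => Polynomial.aeval (MvPolynomial.X 0 : MvPolynomial (Fin 2) K17) (H i))
          (fun i => Polynomial.aeval (MvPolynomial.X 1 : MvPolynomial (Fin 2) K17) (H i)) m n := by
    intro m
    induction m using Nat.strong_induction_on with
    | _ m IH =>
      rcases m with _ | m'
      · intro n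
        rw [hHb0 n]
        simp [S17, c17_zero, h0]
      · intro n
        have e : Hb (m' + 1) n = 2 * MvPolynomial.X 0 * Hb m' n
            - (if m' = 0 then 0 else MvPolynomial.C (1 - q17 ^ m') * Hb (m' - 1) n)
            - (if n = 0 then 0 else
                MvPolynomial.C (q17 ^ m' * (1 - q17 ^ n) * r17) * Hb m' (n - 1)) := by
          linear_combination -hHbrec m' n
        rw [e, IH m' (by omega) n, IH m' (by omega) (n - 1), IH (m' - 1) (by omega) n]
        linear_combination key17 _ _ hG m' n
  intro m n
  rw [main m n]
  simp only [S17, c17]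
end
end

section
/- Let A = ⊕_{j∈ℕ} A_j be an ℕ-graded associative algebra over a field K, generated in degrees 0 and 1, and let ∗ be a 0-equivariant star product on A (an associative K-bilinear product with a∗b − ab ∈ A_{<m+n} for a ∈ A_m, b ∈ A_n, and a∗h = ah, h∗a = ha for h ∈ A_0). Then ∗ is uniquely determined by the maps μ^L_f: A → A, μ^L_f(a) = f∗a − fa, for f ∈ A_1. That is, if ∗ and ∗' are two 0-equivariant star products on A with f∗a − fa = f∗'a − fa for all f ∈ A_1, a ∈ A, then ∗ = ∗'. -/
set_option synthInstance.maxHeartbeats 1000000 in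
set_option maxHeartbeats 2000000 in
/-- a 0-equivariant star product on an ℕ-graded algebra generated
in degrees 0 and 1 is uniquely determined by the maps `μ^L_f(a) = f∗a - fa` for
`f` of degree 1: two such star products with the same maps coincide. -/
theorem stmt19 {K : Type*} [Field K] {A : Type*} [Ring A] [Algebra K A]
    (𝒜 : ℕ → Submodule K A)
    (hinternal : DirectSum.IsInternal 𝒜)
    (hgradedmul : ∀ m n : ℕ, ∀ a ∈ 𝒜 m, ∀ b ∈ 𝒜 n, a * b ∈ 𝒜 (m + n))
    (hgen : Algebra.adjoin K ((𝒜 0 : Set A) ∪ (𝒜 1 : Set A)) = ⊤)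
    (s1 s2 : A → A → A)
    -- `s1` is K-bilinear
    (h1addl : ∀ a b c : A, s1 (a + b) c = s1 a c + s1 b c)
    (h1addr : ∀ a b c : A, s1 a (b + c) = s1 a b + s1 a c)
    (h1smull : ∀ (k : K) (a b : A), s1 (k • a) b = k • s1 a b)
    (h1smulr : ∀ (k : K) (a b : A), s1 a (k • b) = k • s1 a b)
    -- `s2` is K-bilinear
    (h2addl : ∀ a b c : A, s2 (a + b) c = s2 a c + s2 b c)
    (h2addr : ∀ a b c : A, s2 a (b + c) = s2 a b + s2 a c)
    (h2smull : ∀ (k : K) (a b : A), s2 (k • a) b = k • s2 a b)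
    (h2smulr : ∀ (k : K) (a b : A), s2 a (k • b) = k • s2 a b)
    -- both are associative
    (h1assoc : ∀ a b c : A, s1 (s1 a b) c = s1 a (s1 b c))
    (h2assoc : ∀ a b c : A, s2 (s2 a b) c = s2 a (s2 b c))
    -- both are star products: `a ∗ b - a b ∈ A_{< m+n}` for homogeneous `a`, `b`
    (h1filt : ∀ m n : ℕ, ∀ a ∈ 𝒜 m, ∀ b ∈ 𝒜 n, s1 a b - a * b ∈ ⨆ j < m + n, 𝒜 j)
    (h2filt : ∀ m n : ℕ, ∀ a ∈ 𝒜 m, ∀ b ∈ 𝒜 n, s2 a b - a * b ∈ ⨆ j < m + n, 𝒜 j)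
    -- both are 0-equivariant
    (h1equiv : ∀ h ∈ 𝒜 0, ∀ a : A, s1 h a = h * a ∧ s1 a h = a * h)
    (h2equiv : ∀ h ∈ 𝒜 0, ∀ a : A, s2 h a = h * a ∧ s2 a h = a * h)
    -- the maps `μ^L_f` agree for all `f` of degree 1
    (heq : ∀ f ∈ 𝒜 1, ∀ a : A, s1 f a - f * a = s2 f a - f * a) :
    s1 = s2 := by
  classical
  haveI : DirectSum.Decomposition 𝒜 := hinternal.chooseDecomposition
  set G : Set A := (𝒜 0 : Set A) ∪ (𝒜 1 : Set A) with hG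
  -- the set of elements `b` with `s1 b · = s2 b ·` is a submodule
  let S : Submodule K A :=
    { carrier := {b | ∀ a, s1 b a = s2 b a}
      add_mem' := fun hb hc a => by rw [h1addl, h2addl, hb a, hc a]
      zero_mem' := fun a => by
        rw [show (0 : A) = (0 : K) • (0 : A) by simp, h1smull, h2smull,
          zero_smul, zero_smul]
      smul_mem' := fun k b hb a => by rw [h1smull, h2smull, hb a] }
  have memS : ∀ x : A, x ∈ S ↔ ∀ a, s1 x a = s2 x a := fun _ => Iff.rfl
  have hS0 : ∀ h ∈ 𝒜 0, h ∈ S := fun h hh => (memS h).2 fun a => by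
    rw [(h1equiv h hh a).1, (h2equiv h hh a).1]
  have hS1 : ∀ f ∈ 𝒜 1, f ∈ S := fun f hf => (memS f).2 fun a =>
    sub_left_inj.mp (heq f hf a)
  -- `S` is closed under `s1`
  have hclosS : ∀ y z, y ∈ S → z ∈ S → s1 y z ∈ S := by
    intro y z hy hz
    refine (memS _).2 fun a => ?_
    calc s1 (s1 y z) a = s1 y (s1 z a) := h1assoc y z a
      _ = s1 y (s2 z a) := by rw [(memS z).1 hz a]
      _ = s2 y (s2 z a) := (memS y).1 hy _
      _ = s2 (s2 y z) a := (h2assoc y z a).symm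
      _ = s2 (s1 y z) a := by rw [← (memS y).1 hy z]
  -- products of homogeneous elements of `S` are in `S`, modulo lower filtration
  have hmulS : ∀ (p q : ℕ) (y z : A), y ∈ 𝒜 p → z ∈ 𝒜 q → y ∈ S → z ∈ S →
      (⨆ j, ⨆ _ : j < p + q, 𝒜 j) ≤ S → y * z ∈ S := by
    intro p q y z hyp hzq hyS hzS hle
    have : y * z = s1 y z - (s1 y z - y * z) := (sub_sub_cancel _ _).symm
    rw [this]
    exact S.sub_mem (hclosS y z hyS hzS) (hle (h1filt p q y hyp z hzq))
  -- projections onto graded components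
  let π : ℕ → A →ₗ[K] A := fun n =>
    { toFun := fun x => (DirectSum.decompose 𝒜 x n : A)
      map_add' := fun x y => by simp [DirectSum.decompose_add]
      map_smul' := fun k x => by
        show (DirectSum.decompose 𝒜 (k • x) n : A) = k • (DirectSum.decompose 𝒜 x n : A)
        rw [DirectSum.decompose_smul]
        rfl }
  have hπ : ∀ (n : ℕ) (x : A), π n x = (DirectSum.decompose 𝒜 x n : A) := fun _ _ => rfl
  -- 1 is in degree 0
  have hone : (1 : A) ∈ 𝒜 0 := by
    set e0 : A := (DirectSum.decompose 𝒜 (1 : A) 0 : A) with he0def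
    have he0 : e0 ∈ 𝒜 0 := SetLike.coe_mem _
    have hre : ∀ m : ℕ, ∀ a ∈ 𝒜 m, a * e0 = a := by
      intro m a ha
      have hsum : (1 : A) = ∑ j ∈ (DirectSum.decompose 𝒜 (1 : A)).support,
          (DirectSum.decompose 𝒜 (1 : A) j : A) :=
        (DirectSum.sum_support_decompose 𝒜 1).symm
      have h2 : a = ∑ j ∈ (DirectSum.decompose 𝒜 (1 : A)).support,
          a * (DirectSum.decompose 𝒜 (1 : A) j : A) := by
        rw [← Finset.mul_sum, ← hsum, mul_one]
      have h3 : π m a = ∑ j ∈ (DirectSum.decompose 𝒜 (1 : A)).support,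
          π m (a * (DirectSum.decompose 𝒜 (1 : A) j : A)) := by
        rw [← map_sum, ← h2]
      have h4 : ∀ j ∈ (DirectSum.decompose 𝒜 (1 : A)).support, j ≠ 0 →
          π m (a * (DirectSum.decompose 𝒜 (1 : A) j : A)) = 0 := by
        intro j _ hj
        have hmem : a * (DirectSum.decompose 𝒜 (1 : A) j : A) ∈ 𝒜 (m + j) :=
          hgradedmul m j a ha _ (SetLike.coe_mem _)
        rw [hπ]
        exact DirectSum.decompose_of_mem_ne 𝒜 hmem (by omega)
      have h5 : (0 : ℕ) ∉ (DirectSum.decompose 𝒜 (1 : A)).support →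
          π m (a * (DirectSum.decompose 𝒜 (1 : A) 0 : A)) = 0 := by
        intro h
        have : DirectSum.decompose 𝒜 (1 : A) 0 = 0 := DFinsupp.notMem_support_iff.mp h
        rw [this]
        simp
      rw [Finset.sum_eq_single 0 h4 h5, hπ, DirectSum.decompose_of_mem_same 𝒜 ha] at h3
      have hmem0 : a * e0 ∈ 𝒜 m := by
        simpa using hgradedmul m 0 a ha e0 he0
      rw [hπ, DirectSum.decompose_of_mem_same 𝒜 hmem0] at h3
      exact h3.symm
    have hall : ∀ a : A, a * e0 = a := by
      have hker : (⊤ : Submodule K A) ≤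
          LinearMap.ker (LinearMap.mulRight K e0 - LinearMap.id) := by
        rw [← hinternal.submodule_iSup_eq_top]
        refine iSup_le fun m a ha => LinearMap.mem_ker.mpr ?_
        simp [LinearMap.mulRight_apply, hre m a ha]
      intro a
      have := hker (Submodule.mem_top (x := a))
      rw [LinearMap.mem_ker] at this
      simpa [sub_eq_zero, LinearMap.mulRight_apply] using this
    have : e0 = 1 := by rw [← hall 1, one_mul]
    rw [← this]; exact he0
  -- main induction: every homogeneous piece is in `S`
  have hmain : ∀ n : ℕ, 𝒜 n ≤ S := by
    intro n
    induction n using Nat.strong_induction_on with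
    | _ n IH =>
      have hFle : ∀ q ≤ n, (⨆ j, ⨆ _ : j < q, 𝒜 j) ≤ S := fun q hq =>
        iSup₂_le fun j hj => IH j (lt_of_lt_of_le hj hq)
      have hR : ∀ x ∈ Submonoid.closure G, ∃ p, x ∈ 𝒜 p ∧ (p ≤ n → x ∈ S) := by
        intro x hx
        induction hx using Submonoid.closure_induction with
        | mem x hxG =>
          rcases hxG with h | h
          · exact ⟨0, h, fun _ => hS0 _ h⟩
          · exact ⟨1, h, fun _ => hS1 _ h⟩
        | one => exact ⟨0, hone, fun _ => hS0 _ hone⟩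
        | mul y z hy hz Hy Hz =>
          obtain ⟨p, hyp, hyS⟩ := Hy
          obtain ⟨q, hzq, hzS⟩ := Hz
          refine ⟨p + q, hgradedmul _ _ _ hyp _ hzq, fun hpq => ?_⟩
          exact hmulS p q y z hyp hzq (hyS (le_trans (Nat.le_add_right p q) hpq))
            (hzS (le_trans (Nat.le_add_left q p) hpq)) (hFle (p + q) hpq)
      intro b hb
      have htop : Submodule.span K ((Submonoid.closure G : Submonoid A) : Set A) = ⊤ := by
        have h := Algebra.adjoin_eq_span (R := K) (s := G)
        rw [hgen] at h
        exact h.symm.trans (by simp)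
      have hbT : b ∈ Submodule.map (π n)
          (Submodule.span K ((Submonoid.closure G : Submonoid A) : Set A)) := by
        rw [htop]
        exact ⟨b, Submodule.mem_top, by rw [hπ, DirectSum.decompose_of_mem_same 𝒜 hb]⟩
      rw [Submodule.map_span] at hbT
      refine Submodule.span_le.mpr ?_ hbT
      rintro _ ⟨x, hx, rfl⟩
      obtain ⟨p, hxp, hxS⟩ := hR x hx
      by_cases hpn : p = n
      · subst hpn
        rw [SetLike.mem_coe, hπ, DirectSum.decompose_of_mem_same 𝒜 hxp]
        exact hxS le_rfl
      · rw [SetLike.mem_coe, hπ, DirectSum.decompose_of_mem_ne 𝒜 hxp hpn]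
        exact S.zero_mem
  have hSall : ∀ b : A, b ∈ S := by
    intro b
    have : (⊤ : Submodule K A) ≤ S := by
      rw [← hinternal.submodule_iSup_eq_top]
      exact iSup_le hmain
    exact this Submodule.mem_top
  funext b a
  exact (memS b).1 (hSall b) a
end
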